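/- Let I ⊆ ℝ be a bounded interval or an interval contained in [0,∞), let s ≥ 0, k ≥ 1, m = s+2k, and let b = (b_1,…,b_k) ∈ ℬ, i.e., the b_i are pairwise distinct and b_i ∉ I for all i. Then the functions f_1(·,b),…,f_m(·,b) of the rational system form a Chebyshev system on I: there is ε ∈ {−1,1} such that ε·det(f_i(t_j,b))_{i,j=1}^m > 0 for all t_1 < ⋯ < t_m in I. -/

import Mathlib

open Matrix Finset

/-- The rational system: `t^{i−1}` for `i = 1,…,s` followed, for each `i = 1,…,k`,
by `1/(t−bᵢ)` and `1/(t−bᵢ)²`. -/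
noncomputable def fRat (s k : ℕ) (b : Fin k → ℝ) (i : Fin (s + 2 * k)) (t : ℝ) : ℝ :=
  if hi : i.val < s then t ^ i.val
  else
    let q : Fin k := ⟨(i.val - s) / 2, by have := i.isLt; omega⟩
    if (i.val - s) % 2 = 0 then (t - b q)⁻¹ else ((t - b q) ^ 2)⁻¹

def IsChebyshevSystem {n : ℕ} (g : Fin n → ℝ → ℝ) (I : Set ℝ) : Prop :=
  ∃ ε : ℝ, (ε = 1 ∨ ε = -1) ∧ ∀ x : Fin n → ℝ, StrictMono x → (∀ j, x j ∈ I) →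
    0 < ε * (Matrix.of fun i j => g i (x j)).det

section Aux
open Polynomial

noncomputable def Qex (k : ℕ) (b : Fin k → ℝ) (q : Fin k) : ℝ[X] :=
  ∏ r ∈ Finset.univ.erase q, (X - C (b r))

noncomputable def Qfull (k : ℕ) (b : Fin k → ℝ) : ℝ[X] := ∏ r, (X - C (b r))

noncomputable def gPoly (s k : ℕ) (b : Fin k → ℝ) (i : Fin (s + 2 * k)) : ℝ[X] :=
  if hi : i.val < s then X ^ i.val * (Qfull k b) ^ 2
  else
    let q : Fin k := ⟨(i.val - s) / 2, by have := i.isLt; omega⟩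
    if (i.val - s) % 2 = 0 then (X - C (b q)) * (Qex k b q) ^ 2 else (Qex k b q) ^ 2

variable {s k : ℕ} (b : Fin k → ℝ)

lemma Qfull_eq (q : Fin k) : Qfull k b = (X - C (b q)) * Qex k b q :=
  (Finset.mul_prod_erase univ _ (mem_univ q)).symm

lemma eval_Qex_ne (hb : Function.Injective b) (q : Fin k) : (Qex k b q).eval (b q) ≠ 0 := by
  simp only [Qex, eval_prod, eval_sub, eval_X, eval_C]
  rw [Finset.prod_ne_zero_iff]
  intro r hr
  exact sub_ne_zero.2 fun h => (Finset.mem_erase.1 hr).1 (hb h.symm)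

lemma eval_Qex_zero {q q' : Fin k} (h : q' ≠ q) : (Qex k b q').eval (b q) = 0 := by
  simp only [Qex, eval_prod, eval_sub, eval_X, eval_C]
  exact Finset.prod_eq_zero (Finset.mem_erase.2 ⟨h.symm, mem_univ q⟩) (sub_self _)

lemma Qfull_ne_zero : Qfull k b ≠ 0 := by
  rw [Qfull, Finset.prod_ne_zero_iff]; intro r _; exact X_sub_C_ne_zero _

lemma natDegree_Qfull : (Qfull k b).natDegree = k := by
  rw [Qfull, Polynomial.natDegree_prod _ _ (fun r _ => X_sub_C_ne_zero _)]
  simp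

lemma natDegree_Qex (q : Fin k) : (Qex k b q).natDegree = k - 1 := by
  rw [Qex, Polynomial.natDegree_prod _ _ (fun r _ => X_sub_C_ne_zero _)]
  simp [Finset.card_erase_of_mem]

lemma eval_gPoly (t : ℝ) (ht : ∀ q, t ≠ b q) (i : Fin (s + 2 * k)) :
    (gPoly s k b i).eval t = fRat s k b i t * ((Qfull k b).eval t) ^ 2 := by
  unfold gPoly fRat
  split
  · simp [mul_comm]
  · next hi =>
    set q : Fin k := ⟨(i.val - s) / 2, by have := i.isLt; omega⟩ with hq
    have hne : t - b q ≠ 0 := sub_ne_zero.2 (ht q)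
    rw [Qfull_eq b q]
    split
    · simp only [eval_mul, eval_pow, eval_sub, eval_X, eval_C]
      field_simp
    · simp only [eval_mul, eval_pow, eval_sub, eval_X, eval_C]
      field_simp

lemma natDegree_gPoly (hk : 1 ≤ k) (i : Fin (s + 2 * k)) :
    (gPoly s k b i).natDegree ≤ s + 2 * k - 1 := by
  unfold gPoly
  split
  · next hi =>
    refine (Polynomial.natDegree_mul_le).trans ?_
    have h1 : (X ^ i.val : ℝ[X]).natDegree ≤ i.val := natDegree_X_pow_le _
    have h2 : ((Qfull k b) ^ 2).natDegree ≤ 2 * k := by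
      refine (Polynomial.natDegree_pow_le).trans ?_
      rw [natDegree_Qfull]
    omega
  · next hi =>
    dsimp only
    have hQex : ∀ q, ((Qex k b q) ^ 2).natDegree ≤ 2 * (k - 1) := by
      intro q
      refine (Polynomial.natDegree_pow_le).trans ?_
      rw [natDegree_Qex]
    split
    · refine (Polynomial.natDegree_mul_le).trans ?_
      have h1 : (X - C (b ⟨(i.val - s) / 2, by have := i.isLt; omega⟩) : ℝ[X]).natDegree ≤ 1 :=
        (natDegree_X_sub_C _).le
      have := hQex ⟨(i.val - s) / 2, by have := i.isLt; omega⟩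
      omega
    · have := hQex ⟨(i.val - s) / 2, by have := i.isLt; omega⟩
      omega

lemma gPoly_of_lt (i : Fin (s + 2 * k)) (hi : i.val < s) :
    gPoly s k b i = X ^ i.val * (Qfull k b) ^ 2 := by
  unfold gPoly; rw [dif_pos hi]

lemma gPoly_of_A (i : Fin (s + 2 * k)) (q : Fin k) (hi : i.val = s + 2 * q.val) :
    gPoly s k b i = (X - C (b q)) * (Qex k b q) ^ 2 := by
  unfold gPoly
  rw [dif_neg (by omega)]
  dsimp only
  have hq : (⟨(i.val - s) / 2, by have := i.isLt; omega⟩ : Fin k) = q := by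
    apply Fin.ext; simp; omega
  rw [hq, if_pos (by omega)]

lemma gPoly_of_B (i : Fin (s + 2 * k)) (q : Fin k) (hi : i.val = s + 2 * q.val + 1) :
    gPoly s k b i = (Qex k b q) ^ 2 := by
  unfold gPoly
  rw [dif_neg (by omega)]
  dsimp only
  have hq : (⟨(i.val - s) / 2, by have := i.isLt; omega⟩ : Fin k) = q := by
    apply Fin.ext; simp; omega
  rw [hq, if_neg (by omega)]

lemma exists_AB (i : Fin (s + 2 * k)) (hi : ¬ i.val < s) :
    ∃ q : Fin k, i.val = s + 2 * q.val ∨ i.val = s + 2 * q.val + 1 :=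
  ⟨⟨(i.val - s) / 2, by have := i.isLt; omega⟩, by simp; omega⟩

/-- derivative of `(X-a)^2 * h` vanishes at `a`. -/
lemma deriv_sq_eval (a : ℝ) (h : ℝ[X]) :
    ((derivative ((X - C a) ^ 2 * h)).eval a) = 0 := by
  simp [derivative_mul, derivative_pow]

lemma Qex_factor {q q' : Fin k} (h : q' ≠ q) :
    ∃ R : ℝ[X], Qex k b q' = (X - C (b q)) * R := by
  refine ⟨∏ r ∈ (Finset.univ.erase q').erase q, (X - C (b r)), ?_⟩
  rw [Qex]
  exact (Finset.mul_prod_erase _ _ (Finset.mem_erase.2 ⟨h.symm, mem_univ q⟩)).symm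

lemma eval_gPoly_at_pole (q : Fin k) (i : Fin (s + 2 * k))
    (hiB : i.val ≠ s + 2 * q.val + 1) : (gPoly s k b i).eval (b q) = 0 := by
  by_cases hi : i.val < s
  · rw [gPoly_of_lt b i hi, Qfull_eq b q]
    simp
  · obtain ⟨q', hq'⟩ := exists_AB i hi
    rcases hq' with h | h
    · rw [gPoly_of_A b i q' h]
      by_cases hqq : q' = q
      · subst hqq; simp
      · simp [eval_Qex_zero b hqq]
    · have hqq : q' ≠ q := fun hq => hiB (by rw [h, hq])
      rw [gPoly_of_B b i q' h]
      simp [eval_Qex_zero b hqq]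

lemma eval_deriv_gPoly_at_pole (q : Fin k) (i : Fin (s + 2 * k))
    (hiA : i.val ≠ s + 2 * q.val) (hiB : i.val ≠ s + 2 * q.val + 1) :
    ((derivative (gPoly s k b i)).eval (b q)) = 0 := by
  by_cases hi : i.val < s
  · rw [gPoly_of_lt b i hi, Qfull_eq b q, mul_pow, mul_left_comm]
    exact deriv_sq_eval _ _
  · obtain ⟨q', hq'⟩ := exists_AB i hi
    have hqq : q' ≠ q := by
      rintro rfl
      rcases hq' with h | h
      exacts [hiA h, hiB h]
    obtain ⟨R, hR⟩ := Qex_factor b hqq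
    rcases hq' with h | h
    · rw [gPoly_of_A b i q' h, hR, mul_pow, mul_left_comm]
      exact deriv_sq_eval _ _
    · rw [gPoly_of_B b i q' h, hR, mul_pow]
      exact deriv_sq_eval _ _

lemma eval_deriv_gPoly_A (q : Fin k) (i : Fin (s + 2 * k)) (hi : i.val = s + 2 * q.val) :
    ((derivative (gPoly s k b i)).eval (b q)) = ((Qex k b q).eval (b q)) ^ 2 := by
  rw [gPoly_of_A b i q hi]
  simp [derivative_mul]

lemma coeffs_zero (hb : Function.Injective b) (c : Fin (s + 2 * k) → ℝ)
    (hc : ∑ i, C (c i) * gPoly s k b i = 0) : ∀ i, c i = 0 := by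
  have hQx : ∀ q, ((Qex k b q).eval (b q)) ^ 2 ≠ 0 := fun q => pow_ne_zero _ (eval_Qex_ne b hb q)
  -- step 1 : type-B coefficients vanish
  have hB : ∀ q : Fin k, ∀ i : Fin (s + 2 * k), i.val = s + 2 * q.val + 1 → c i = 0 := by
    intro q i hi
    have h1 := congrArg (eval (b q)) hc
    rw [eval_finset_sum] at h1
    simp only [eval_mul, eval_C, eval_zero] at h1
    rw [Finset.sum_eq_single i (fun j _ hj => by
        rw [eval_gPoly_at_pole b q j (fun hjv => hj (Fin.ext (hjv.trans hi.symm))), mul_zero])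
      (fun h => absurd (mem_univ i) h)] at h1
    rw [gPoly_of_B b i q hi] at h1
    simp only [eval_pow] at h1
    exact (mul_eq_zero.1 h1).resolve_right (hQx q)
  -- step 2 : type-A coefficients vanish
  have hA : ∀ q : Fin k, ∀ i : Fin (s + 2 * k), i.val = s + 2 * q.val → c i = 0 := by
    intro q i hi
    have h1 := congrArg (fun p => (derivative p).eval (b q)) hc
    simp only [derivative_zero, eval_zero] at h1
    rw [derivative_sum] at h1
    simp only [derivative_mul, derivative_C, zero_mul, zero_add] at h1
    rw [eval_finset_sum] at h1
    simp only [eval_mul, eval_C] at h1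
    rw [Finset.sum_eq_single i (fun j _ hj => ?_) (fun h => absurd (mem_univ i) h)] at h1
    · rw [eval_deriv_gPoly_A b q i hi] at h1
      exact (mul_eq_zero.1 h1).resolve_right (hQx q)
    · by_cases hjB : j.val = s + 2 * q.val + 1
      · rw [hB q j hjB, zero_mul]
      · rw [eval_deriv_gPoly_at_pole b q j
          (fun hjv => hj (Fin.ext (hjv.trans hi.symm))) hjB, mul_zero]
  -- step 3 : polynomial coefficients vanish
  intro i
  by_cases hi : i.val < s
  · have hsum : ∑ j ∈ univ.filter (fun j : Fin (s + 2 * k) => j.val < s), C (c j) * gPoly s k b j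
        = ∑ j, C (c j) * gPoly s k b j := by
      apply Finset.sum_filter_of_ne
      intro j _ hne
      by_contra hjs
      obtain ⟨q, hq⟩ := exists_AB j hjs
      rcases hq with h | h
      · exact hne (by rw [hA q j h]; simp)
      · exact hne (by rw [hB q j h]; simp)
    have h2 : (∑ j ∈ univ.filter (fun j : Fin (s + 2 * k) => j.val < s), C (c j) * X ^ j.val)
        * (Qfull k b) ^ 2 = 0 := by
      rw [Finset.sum_mul]
      calc ∑ j ∈ univ.filter (fun j : Fin (s + 2 * k) => j.val < s), C (c j) * X ^ j.val * (Qfull k b)^2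
          = ∑ j ∈ univ.filter (fun j : Fin (s + 2 * k) => j.val < s), C (c j) * gPoly s k b j := by
            refine Finset.sum_congr rfl fun j hj => ?_
            rw [gPoly_of_lt b j (Finset.mem_filter.1 hj).2, mul_assoc]
        _ = 0 := by rw [hsum, hc]
    have h3 : (∑ j ∈ univ.filter (fun j : Fin (s + 2 * k) => j.val < s), C (c j) * X ^ j.val) = 0 :=
      by
      rcases mul_eq_zero.1 h2 with h | h
      · exact h
      · exact absurd h (pow_ne_zero _ (Qfull_ne_zero b))
    have h4 := congrArg (fun p => Polynomial.coeff p i.val) h3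
    simp only [Polynomial.finset_sum_coeff, Polynomial.coeff_C_mul, Polynomial.coeff_X_pow,
      Polynomial.coeff_zero] at h4
    rw [Finset.sum_eq_single i (fun j hj hji => by
        rw [if_neg (fun h => hji (Fin.ext h.symm)), mul_zero])
      (fun h => absurd (Finset.mem_filter.2 ⟨mem_univ i, hi⟩) h)] at h4
    rw [if_pos rfl, mul_one] at h4
    exact h4
  · obtain ⟨q, hq⟩ := exists_AB i hi
    rcases hq with h | h
    exacts [hA q i h, hB q i h]

end Aux

open Polynomial in
lemma det_fRat_ne_zero {s k : ℕ} (hk : 1 ≤ k) (b : Fin k → ℝ) (hb : Function.Injective b)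
    (x : Fin (s + 2 * k) → ℝ) (hx : Function.Injective x) (hxb : ∀ j q, x j ≠ b q) :
    (Matrix.of fun i j => fRat s k b i (x j)).det ≠ 0 := by
  intro hdet
  obtain ⟨c, hc0, hcv⟩ := Matrix.exists_vecMul_eq_zero_iff.2 hdet
  set P : ℝ[X] := ∑ i, C (c i) * gPoly s k b i with hP
  have hPne : P ≠ 0 := fun h => hc0 (funext (coeffs_zero b hb c h))
  have hroot : ∀ j, P.IsRoot (x j) := by
    intro j
    have h1 : ∑ i, c i * fRat s k b i (x j) = 0 := by
      have := congrFun hcv j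
      simpa [Matrix.vecMul, dotProduct] using this
    simp only [IsRoot, hP, eval_finset_sum, eval_mul, eval_C]
    calc ∑ i, c i * (gPoly s k b i).eval (x j)
        = (∑ i, c i * fRat s k b i (x j)) * ((Qfull k b).eval (x j)) ^ 2 := by
          rw [Finset.sum_mul]
          refine Finset.sum_congr rfl fun i _ => ?_
          rw [eval_gPoly b (x j) (hxb j) i]; ring
      _ = 0 := by rw [h1, zero_mul]
  have hcard : s + 2 * k ≤ P.natDegree := by
    have hsub : (Finset.univ.image x).val ⊆ P.roots := by
      intro a ha
      rw [Finset.mem_val, Finset.mem_image] at ha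
      obtain ⟨j, _, rfl⟩ := ha
      exact (Polynomial.mem_roots hPne).2 (hroot j)
    have := Polynomial.card_le_degree_of_subset_roots hsub
    rwa [Finset.card_image_of_injective _ hx, Finset.card_univ, Fintype.card_fin] at this
  have hdeg : P.natDegree ≤ s + 2 * k - 1 := by
    refine Polynomial.natDegree_sum_le_of_forall_le _ _ fun i _ => ?_
    exact (Polynomial.natDegree_C_mul_le _ _).trans (natDegree_gPoly b hk i)
  omega

/-- for `b ∈ ℬ` the rational system is a Chebyshev system on any
bounded interval or any interval contained in `[0,∞)`. -/
theorem stmt9 (s k : ℕ) (hk : 1 ≤ k) (I : Set ℝ) (hI : I.OrdConnected)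
    (hIb : Bornology.IsBounded I ∨ I ⊆ Set.Ici 0)
    (b : Fin k → ℝ) (hbI : ∀ i, b i ∉ I) (hb : Function.Injective b) :
    IsChebyshevSystem (fRat s k b) I := by
  classical
  set D : (Fin (s + 2 * k) → ℝ) → ℝ :=
    fun x => (Matrix.of fun i j => fRat s k b i (x j)).det with hD
  set S : Set (Fin (s + 2 * k) → ℝ) := {x | StrictMono x ∧ ∀ j, x j ∈ I} with hS
  have hxb : ∀ x ∈ S, ∀ j q, x j ≠ b q := fun x hx j q h => hbI q (h ▸ hx.2 j)
  have hDne : ∀ x ∈ S, D x ≠ 0 := fun x hx =>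
    det_fRat_ne_zero hk b hb x hx.1.injective (hxb x hx)
  by_cases hSe : S.Nonempty
  · obtain ⟨x₀, hx₀⟩ := hSe
    have hIconv : Convex ℝ I := hI.convex
    have hconv : Convex ℝ S := by
      intro x hx y hy a a' ha ha' haa
      refine ⟨fun i j hij => ?_, fun j => hIconv (hx.2 j) (hy.2 j) ha ha' haa⟩
      simp only [Pi.add_apply, Pi.smul_apply, smul_eq_mul]
      rcases eq_or_lt_of_le ha with h0 | h0
      · have h1 : a' = 1 := by linarith
        simp only [← h0, h1, zero_mul, one_mul, zero_add]
        exact hy.1 hij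
      · have h1 : a * x i < a * x j := (mul_lt_mul_iff_right₀ h0).2 (hx.1 hij)
        have h2 : a' * y i ≤ a' * y j := mul_le_mul_of_nonneg_left (hy.1 hij).le ha'
        linarith
    have hpc : IsPreconnected S := hconv.isPreconnected
    have hentry : ∀ (i : Fin (s + 2 * k)) (j : Fin (s + 2 * k)),
        ContinuousOn (fun x : Fin (s + 2 * k) → ℝ => fRat s k b i (x j)) S := by
      intro i j
      by_cases hi : i.val < s
      · simp only [fRat, dif_pos hi]
        exact ((continuous_apply j).pow _).continuousOn
      · by_cases hp : (i.val - s) % 2 = 0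
        · simp only [fRat, dif_neg hi, if_pos hp]
          exact ContinuousOn.inv₀ ((continuous_apply j).sub continuous_const).continuousOn
            (fun x hx => sub_ne_zero.2 (hxb x hx j _))
        · simp only [fRat, dif_neg hi, if_neg hp]
          exact ContinuousOn.inv₀ (((continuous_apply j).sub continuous_const).pow 2).continuousOn
            (fun x hx => pow_ne_zero _ (sub_ne_zero.2 (hxb x hx j _)))
    have hM : ContinuousOn
        (fun x : Fin (s + 2 * k) → ℝ => (Matrix.of fun i j => fRat s k b i (x j))) S :=
      continuousOn_pi.2 fun i => continuousOn_pi.2 fun j => hentry i j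
    have hcont : ContinuousOn D S := (Continuous.matrix_det continuous_id).comp_continuousOn hM
    have key : ∀ x ∈ S, ∀ y ∈ S, D x < 0 → 0 < D y → False := by
      intro x hx y hy h1 h2
      have h0 : (0:ℝ) ∈ Set.Icc (D x) (D y) := ⟨h1.le, h2.le⟩
      obtain ⟨z, hz, hz0⟩ := hpc.intermediate_value hx hy hcont h0
      exact hDne z hz hz0
    by_cases h0 : 0 < D x₀
    · refine ⟨1, Or.inl rfl, fun x hmono hmem => ?_⟩
      have hxS : x ∈ S := ⟨hmono, hmem⟩
      rcases (hDne x hxS).lt_or_gt with h | h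
      · exact absurd (key x hxS x₀ hx₀ h h0) not_false
      · simpa using h
    · have hx0neg : D x₀ < 0 := (hDne x₀ hx₀).lt_or_gt.resolve_right h0
      refine ⟨-1, Or.inr rfl, fun x hmono hmem => ?_⟩
      have hxS : x ∈ S := ⟨hmono, hmem⟩
      rcases (hDne x hxS).lt_or_gt with h | h
      · simpa using h
      · exact absurd (key x₀ hx₀ x hxS hx0neg h) not_false
  · refine ⟨1, Or.inl rfl, fun x hmono hmem => ?_⟩
    exact absurd (⟨x, hmono, hmem⟩ : S.Nonempty) hSe
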